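/- Fix ε > 0 and k ∈ ℕ. Let Q = (1/(1+e^ε), e^ε/(1+e^ε)) and Q' = (e^ε/(1+e^ε), 1/(1+e^ε)) be distributions on the two-element ordered set {1,2} (so D_∞(Q‖Q') = D_∞(Q'‖Q) = ε), and let A and A' be the distributions of the maximum of k i.i.d. samples from Q and Q' respectively, where the maximum prefers outcome 2 in probability terms (A = (1−p^k, p^k) with p = e^ε/(1+e^ε), A' = (1−q^k, q^k) with q = 1/(1+e^ε)). Then D_∞(A‖A') ≥ k·ε, and for all λ > 1, D_λ(A‖A') ≥ k·ε − k·log(1+e^{−ε})/(λ−1). -/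
import Mathlib


open scoped BigOperators
open Finset

/-- A probability distribution on a finite set, given by its probability mass function. -/
def IsProbDist {Y : Type*} [Fintype Y] (P : Y → ℝ) : Prop :=
  (∀ y, 0 ≤ P y) ∧ ∑ y, P y = 1

/-- A probability distribution on `ℕ ∪ {0}`, given by its probability mass function. -/
def IsProbDistNat (p : ℕ → ℝ) : Prop :=
  (∀ k, 0 ≤ p k) ∧ (∑' k, p k) = 1

/-- The Rényi divergence of order `lam ∈ (1, ∞)` between two distributions on a finite set:
`D_lam(P‖Q) = (lam-1)⁻¹ log (∑_y P(y)^lam Q(y)^(1-lam))`. -/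
noncomputable def renyiDiv {Y : Type*} [Fintype Y] (lam : ℝ) (P Q : Y → ℝ) : ℝ :=
  (lam - 1)⁻¹ * Real.log (∑ y, P y ^ lam * Q y ^ (1 - lam))

/-- The max divergence `D_∞(P‖Q) = sup { log (P(S)/Q(S)) : S ⊆ Y, P(S) > 0 }`. -/
noncomputable def maxDiv {Y : Type*} [Fintype Y] (P Q : Y → ℝ) : ℝ :=
  sSup {x : ℝ | ∃ S : Finset Y,
    0 < ∑ y ∈ S, P y ∧ x = Real.log ((∑ y ∈ S, P y) / (∑ y ∈ S, Q y))}

/-- `Q(≤ y)`, the probability of the lower set `{z : z ≤ y}`. -/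
noncomputable def cdfLE {Y : Type*} [Fintype Y] [LinearOrder Y] (Q : Y → ℝ) (y : Y) : ℝ :=
  ∑ z ∈ Finset.univ.filter (fun z => z ≤ y), Q z

/-- `Q(< y)`, the probability of the strict lower set `{z : z < y}`. -/
noncomputable def cdfLT {Y : Type*} [Fintype Y] [LinearOrder Y] (Q : Y → ℝ) (y : Y) : ℝ :=
  ∑ z ∈ Finset.univ.filter (fun z => z < y), Q z

/-- The probability generating function `f(x) = E[x^K] = ∑_k P[K=k] x^k`. -/
noncomputable def pgf (p : ℕ → ℝ) (x : ℝ) : ℝ := ∑' k, p k * x ^ k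

/-- The derivative of the probability generating function, `f'(x) = E[K x^(K-1)]`. -/
noncomputable def pgfDeriv (p : ℕ → ℝ) (x : ℝ) : ℝ := ∑' k : ℕ, (k : ℝ) * p k * x ^ (k - 1)

/-- The distribution of the best (maximum) of `K` i.i.d. samples from `Q`, where the number of
samples `K` is drawn first according to the pmf `p`; if `K = 0` the fixed output `y₀` is
returned.  Indeed `P[best ≤ y] = f(Q(≤ y))` for `K ≥ 1`, so the mass at `y` is
`f(Q(≤ y)) - f(Q(< y))`, plus the mass `P[K = 0]` at the default output `y₀`. -/
noncomputable def bestDist {Y : Type*} [Fintype Y] [LinearOrder Y]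
    (p : ℕ → ℝ) (Q : Y → ℝ) (y₀ : Y) : Y → ℝ :=
  fun y => (pgf p (cdfLE Q y) - pgf p (cdfLT Q y)) + p 0 * (if y = y₀ then 1 else 0)

/-- Proposition 14, lower bound for a fixed number of repetitions:
for the randomized-response pair `Q = (1/(1+e^ε), e^ε/(1+e^ε))`,
`Q' = (e^ε/(1+e^ε), 1/(1+e^ε))` on the ordered set `{1,2}`, the distributions of the
maximum of `k` i.i.d. samples are `A = (1-p^k, p^k)` with `p = e^ε/(1+e^ε)` and
`A' = (1-q^k, q^k)` with `q = 1/(1+e^ε)`, and they satisfy `D_∞(A‖A') ≥ k ε` and,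
for all `lam > 1`, `D_lam(A‖A') ≥ k ε - k log(1+e^(-ε))/(lam-1)`. -/
theorem fixed_repetition_lower_bound (ε : ℝ) (hε : 0 < ε) (k : ℕ) (hk : 0 < k) :
    (k : ℝ) * ε ≤
      maxDiv (![1 - (Real.exp ε / (1 + Real.exp ε)) ^ k, (Real.exp ε / (1 + Real.exp ε)) ^ k])
        (![1 - (1 / (1 + Real.exp ε)) ^ k, (1 / (1 + Real.exp ε)) ^ k]) ∧
    ∀ lam : ℝ, 1 < lam →
      (k : ℝ) * ε - (k : ℝ) * Real.log (1 + Real.exp (-ε)) / (lam - 1) ≤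
        renyiDiv lam
          (![1 - (Real.exp ε / (1 + Real.exp ε)) ^ k, (Real.exp ε / (1 + Real.exp ε)) ^ k])
          (![1 - (1 / (1 + Real.exp ε)) ^ k, (1 / (1 + Real.exp ε)) ^ k]) := by
  have hE : (0:ℝ) < Real.exp ε := Real.exp_pos ε
  have hE1 : (0:ℝ) < 1 + Real.exp ε := by positivity
  set E := Real.exp ε with hEdef
  set p := E / (1 + E) with hpdef
  set q := 1 / (1 + E) with hqdef
  have hp : 0 < p := by positivity
  have hq : 0 < q := by positivity
  have hp1 : p ≤ 1 := by rw [hpdef, div_le_one hE1]; linarith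
  have hq1 : q ≤ 1 := by rw [hqdef, div_le_one hE1]; linarith
  have hpk : 0 < p ^ k := pow_pos hp k
  have hqk : 0 < q ^ k := pow_pos hq k
  have hpk1 : p ^ k ≤ 1 := pow_le_one₀ hp.le hp1
  have hqk1 : q ^ k ≤ 1 := pow_le_one₀ hq.le hq1
  have hratio : p / q = E := by rw [hpdef, hqdef]; field_simp
  have hlogp : Real.log p = ε - Real.log (1 + E) := by
    rw [hpdef, Real.log_div (ne_of_gt hE) (ne_of_gt hE1), hEdef, Real.log_exp]
  have hlogq : Real.log q = -Real.log (1 + E) := by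
    rw [hqdef, Real.log_div one_ne_zero (ne_of_gt hE1), Real.log_one]; ring
  have hL : Real.log (1 + E) = ε + Real.log (1 + Real.exp (-ε)) := by
    have h1 : 1 + E = E * (1 + Real.exp (-ε)) := by
      rw [mul_add, mul_one, hEdef, ← Real.exp_add]
      ring_nf
      rw [Real.exp_zero]
      exact add_comm 1 (Real.exp ε)
    rw [h1, Real.log_mul (ne_of_gt hE) (by positivity), hEdef, Real.log_exp]
  constructor
  · -- max divergence
    have hfin : {x : ℝ | ∃ S : Finset (Fin 2),
        0 < ∑ y ∈ S, (![1 - p ^ k, p ^ k]) y ∧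
        x = Real.log ((∑ y ∈ S, (![1 - p ^ k, p ^ k]) y) /
          (∑ y ∈ S, (![1 - q ^ k, q ^ k]) y))}.Finite := by
      apply Set.Finite.subset (Set.finite_range (fun S : Finset (Fin 2) =>
        Real.log ((∑ y ∈ S, (![1 - p ^ k, p ^ k]) y) /
          (∑ y ∈ S, (![1 - q ^ k, q ^ k]) y))))
      rintro x ⟨S, _, rfl⟩
      exact ⟨S, rfl⟩
    apply le_csSup hfin.bddAbove
    refine ⟨{1}, ?_, ?_⟩
    · simpa using hpk
    · have : (p ^ k) / (q ^ k) = Real.exp ((k : ℝ) * ε) := by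
        rw [← div_pow, hratio, hEdef, ← Real.exp_nat_mul]
      simp [this, Real.log_exp]
  · intro lam hlam
    have hlam' : (0:ℝ) < lam - 1 := by linarith
    rw [renyiDiv]
    have hsum : ∑ y : Fin 2, (![1 - p ^ k, p ^ k]) y ^ lam * (![1 - q ^ k, q ^ k]) y ^ (1 - lam)
        = (1 - p ^ k) ^ lam * (1 - q ^ k) ^ (1 - lam) + (p ^ k) ^ lam * (q ^ k) ^ (1 - lam) := by
      simp [Fin.sum_univ_two]
    have hf1 : (0:ℝ) < (p ^ k) ^ lam * (q ^ k) ^ (1 - lam) := by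
      exact mul_pos (Real.rpow_pos_of_pos hpk _) (Real.rpow_pos_of_pos hqk _)
    have hf0 : (0:ℝ) ≤ (1 - p ^ k) ^ lam * (1 - q ^ k) ^ (1 - lam) :=
      mul_nonneg (Real.rpow_nonneg (by linarith) _) (Real.rpow_nonneg (by linarith) _)
    have hlogf1 : Real.log ((p ^ k) ^ lam * (q ^ k) ^ (1 - lam))
        = (k : ℝ) * ε * (lam - 1) - (k : ℝ) * Real.log (1 + Real.exp (-ε)) := by
      rw [Real.log_mul (ne_of_gt (Real.rpow_pos_of_pos hpk _))
          (ne_of_gt (Real.rpow_pos_of_pos hqk _)),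
        Real.log_rpow hpk, Real.log_rpow hqk, Real.log_pow, Real.log_pow, hlogp, hlogq, hL]
      ring
    have hmono : Real.log ((p ^ k) ^ lam * (q ^ k) ^ (1 - lam))
        ≤ Real.log (∑ y : Fin 2, (![1 - p ^ k, p ^ k]) y ^ lam * (![1 - q ^ k, q ^ k]) y ^ (1 - lam)) := by
      rw [hsum]
      gcongr
      linarith
    have heq : (k : ℝ) * ε - (k : ℝ) * Real.log (1 + Real.exp (-ε)) / (lam - 1)
        = (lam - 1)⁻¹ * Real.log ((p ^ k) ^ lam * (q ^ k) ^ (1 - lam)) := by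
      rw [hlogf1]
      field_simp
      try ring
    rw [heq]
    exact mul_le_mul_of_nonneg_left hmono (by positivity)
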